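/- For nonnegative integers m, n and k = m + n + 2, one has Σ_{r=0}^{m} (-1)^{r+k+n} · m! · n! / (r! · (k-r)!) = 1/(k·(n+1)). -/

import Mathlib

open Finset

lemma alt_sum_choose (j : ℕ) : ∀ m, m ≤ j →
    (∑ r ∈ range (m + 1), (-1 : ℚ) ^ r * ((j + 1).choose r)) = (-1) ^ m * (j.choose m) := by
  intro m
  induction m with
  | zero => simp
  | succ m ih =>
    intro hm
    rw [sum_range_succ, ih (Nat.le_of_succ_le hm), Nat.choose_succ_succ']
    push_cast
    ring

theorem stmt_7 (m n : ℕ) (k : ℕ) (hk : k = m + n + 2) :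
    ∑ r ∈ Finset.range (m + 1),
      ((-1 : ℚ) ^ (r + k + n) * (Nat.factorial m) * (Nat.factorial n) /
        ((Nat.factorial r) * (Nat.factorial (k - r)))) = 1 / (k * (n + 1)) := by
  set j := m + n + 1 with hj
  have hkj : k = j + 1 := by omega
  have hstep : ∀ r ∈ Finset.range (m + 1),
      ((-1 : ℚ) ^ (r + k + n) * (Nat.factorial m) * (Nat.factorial n) /
        ((Nat.factorial r) * (Nat.factorial (k - r)))) =
      ((-1 : ℚ) ^ r * ((j + 1).choose r)) *
        ((-1 : ℚ) ^ (k + n) * (Nat.factorial m) * (Nat.factorial n) / (Nat.factorial (j + 1))) := by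
    intro r hr
    rw [Finset.mem_range] at hr
    have hrk : r ≤ j + 1 := by omega
    have hfact : ((j + 1).choose r) * (Nat.factorial r) * (Nat.factorial (j + 1 - r)) =
        Nat.factorial (j + 1) := Nat.choose_mul_factorial_mul_factorial hrk
    have hr0 : (Nat.factorial r : ℚ) ≠ 0 := by exact_mod_cast (Nat.factorial_pos r).ne'
    have hr1 : (Nat.factorial (j + 1 - r) : ℚ) ≠ 0 := by
      exact_mod_cast (Nat.factorial_pos _).ne'
    have hfactQ : (((j + 1).choose r : ℚ)) * (Nat.factorial r) * (Nat.factorial (j + 1 - r)) =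
        Nat.factorial (j + 1) := by exact_mod_cast hfact
    rw [hkj]
    have hre : r + (j + 1) + n = r + (j + 1 + n) := by omega
    rw [hre, pow_add]
    field_simp
    linear_combination (-1 : ℚ) * hfactQ
  rw [Finset.sum_congr rfl hstep, ← Finset.sum_mul,
    alt_sum_choose j m (by omega)]
  have hsign : (-1 : ℚ) ^ m * (-1 : ℚ) ^ (j + 1 + n) = 1 := by
    rw [← pow_add]
    exact Even.neg_one_pow ⟨m + n + 1, by omega⟩
  have hch : (j.choose m) * (Nat.factorial m) * (Nat.factorial (n + 1)) = Nat.factorial j := by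
    have := Nat.choose_mul_factorial_mul_factorial (show m ≤ j by omega)
    simpa [show j - m = n + 1 by omega] using this
  have hchQ : ((j.choose m : ℚ)) * (Nat.factorial m) * ((n + 1) * Nat.factorial n) =
      Nat.factorial j := by
    have : ((n:ℚ) + 1) * Nat.factorial n = Nat.factorial (n + 1) := by
      rw [Nat.factorial_succ]; push_cast; ring
    rw [this]; exact_mod_cast hch
  have hjfac : (Nat.factorial (j + 1) : ℚ) = (j + 1) * Nat.factorial j := by
    rw [Nat.factorial_succ]; push_cast; ring
  have hj0 : (Nat.factorial j : ℚ) ≠ 0 := by exact_mod_cast (Nat.factorial_pos j).ne'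
  have hk0 : (k : ℚ) ≠ 0 := by rw [hkj]; push_cast; positivity
  rw [hkj, hjfac]
  push_cast
  field_simp
  linear_combination (((n:ℚ)+1)*(j.choose m)*m.factorial*n.factorial) * hsign + hchQ
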